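/- Let E be a real Hilbert space, φ : E → ℝ a convex function, α > 0, ε ≥ 0, and z ∈ E. Suppose h⁺ ∈ E is an ε-optimal solution of the proximal problem, i.e. (α/2)‖h⁺ − z‖² + φ(h⁺) ≤ ε + inf_{u ∈ E} [(α/2)‖u − z‖² + φ(u)]. Then there exists δ ∈ E with ‖δ‖ ≤ √(2ε/α) such that the vector α(z − h⁺ − δ) is an ε-subgradient of φ at h⁺, i.e. for all y ∈ E, φ(y) ≥ φ(h⁺) + ⟪α(z − h⁺ − δ), y − h⁺⟫ − ε. -/

import Mathlib

open scoped RealInnerProductSpace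
open Filter Topology

private lemma exp1 {E : Type*} [NormedAddCommGroup E] [InnerProductSpace ℝ E]
    (a b : E) (t : ℝ) : ‖a + t • b‖ ^ 2 = ‖a‖ ^ 2 + 2 * t * ⟪a, b⟫ + t ^ 2 * ‖b‖ ^ 2 := by
  rw [norm_add_sq_real, real_inner_smul_right, norm_smul, mul_pow, Real.norm_eq_abs, sq_abs]
  ring

set_option maxHeartbeats 1000000 in
/-- Lemma 2 (Schmidt et al.): an ε-optimal solution of the proximal problem yields an
ε-subgradient certificate. -/
theorem stmt1 {E : Type*} [NormedAddCommGroup E] [InnerProductSpace ℝ E] [CompleteSpace E]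
    (φ : E → ℝ) (hφ : ConvexOn ℝ Set.univ φ)
    (α : ℝ) (hα : 0 < α) (ε : ℝ) (hε : 0 ≤ ε) (z hp : E)
    (hopt : ∀ u : E, α / 2 * ‖hp - z‖ ^ 2 + φ hp ≤ ε + (α / 2 * ‖u - z‖ ^ 2 + φ u)) :
    ∃ δ : E, ‖δ‖ ≤ Real.sqrt (2 * ε / α) ∧
      ∀ y : E, φ y ≥ φ hp + ⟪α • (z - hp - δ), y - hp⟫ - ε := by
  classical
  have hne : Nonempty E := ⟨0⟩
  set ψ : E → ℝ := fun u => α / 2 * ‖u - z‖ ^ 2 + φ u with hψdef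
  have hψlb : ∀ u, ψ hp - ε ≤ ψ u := fun u => by
    have := hopt u; simp only [hψdef]; linarith
  have hbdd : BddBelow (Set.range ψ) := ⟨ψ hp - ε, by rintro _ ⟨u, rfl⟩; exact hψlb u⟩
  set m : ℝ := ⨅ u, ψ u with hmdef
  have hm_le : ∀ u, m ≤ ψ u := fun u => ciInf_le hbdd u
  -- minimizing sequence
  have hex : ∀ n : ℕ, ∃ v : E, ψ v < m + (1 / ((n : ℝ) + 1)) ^ 2 := by
    intro n
    refine exists_lt_of_ciInf_lt ?_
    have : (0:ℝ) < (1 / ((n : ℝ) + 1)) ^ 2 := by positivity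
    linarith
  choose u hu using hex
  -- strong convexity midpoint estimate
  have midineq : ∀ v w : E, m + α / 8 * ‖w - v‖ ^ 2 ≤ (ψ v + ψ w) / 2 := by
    intro v w
    have hconv := hφ.2 (Set.mem_univ v) (Set.mem_univ w)
      (by norm_num : (0:ℝ) ≤ 1/2) (by norm_num : (0:ℝ) ≤ 1/2) (by norm_num : (1:ℝ)/2 + 1/2 = 1)
    have hmid : (1/2 : ℝ) • v + (1/2 : ℝ) • w = v + (1/2 : ℝ) • (w - v) := by
      module
    rw [hmid] at hconv
    simp only [smul_eq_mul] at hconv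
    have hq : α * ‖v + (1/2:ℝ) • (w - v) - z‖ ^ 2
        = α * ‖v - z‖ ^ 2 + α * ⟪v - z, w - v⟫ + α * ((1/4:ℝ) * ‖w - v‖ ^ 2) := by
      rw [show v + (1/2:ℝ) • (w - v) - z = (v - z) + (1/2:ℝ) • (w - v) by abel, exp1]
      ring
    have h2 : α * ‖w - z‖ ^ 2
        = α * ‖v - z‖ ^ 2 + α * (2 * ⟪v - z, w - v⟫) + α * ‖w - v‖ ^ 2 := by
      rw [show w - z = (v - z) + (1:ℝ) • (w - v) by module, exp1]
      ring
    have hmle := hm_le (v + (1/2:ℝ) • (w - v))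
    simp only [hψdef] at hmle ⊢
    linarith [hmle, hconv, hq, h2]
  -- the sequence is Cauchy
  have hcauchy : CauchySeq u := by
    refine cauchySeq_of_le_tendsto_0 (fun N : ℕ => Real.sqrt (8/α) * (1 / ((N:ℝ) + 1))) ?_ ?_
    · intro n p N hn hpN
      have h1 : ψ (u n) < m + (1 / ((n : ℝ) + 1)) ^ 2 := hu n
      have h2 : ψ (u p) < m + (1 / ((p : ℝ) + 1)) ^ 2 := hu p
      have hmono : ∀ k l : ℕ, l ≤ k → (1 / ((k : ℝ) + 1)) ^ 2 ≤ (1 / ((l : ℝ) + 1)) ^ 2 := by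
        intro k l hkl
        have hkl' : ((l : ℝ) + 1) ≤ (k : ℝ) + 1 := by
          have : (l : ℝ) ≤ (k : ℝ) := Nat.cast_le.mpr hkl
          linarith
        have h1k : (1 / ((k : ℝ) + 1)) ≤ 1 / ((l : ℝ) + 1) :=
          one_div_le_one_div_of_le (by positivity) hkl'
        have h0 : (0:ℝ) ≤ 1 / ((k : ℝ) + 1) := by positivity
        nlinarith
      have hmid := midineq (u n) (u p)
      have hsq : ‖u p - u n‖ ^ 2 ≤ 8/α * (1 / ((N:ℝ) + 1)) ^ 2 := by
        have hb1 := hmono n N hn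
        have hb2 := hmono p N hpN
        have hkey : α / 8 * ‖u p - u n‖ ^ 2 ≤ (1 / ((N:ℝ) + 1)) ^ 2 := by linarith
        have h8 : (0:ℝ) < 8/α := by positivity
        calc ‖u p - u n‖ ^ 2 = 8/α * (α/8 * ‖u p - u n‖ ^ 2) := by field_simp
          _ ≤ 8/α * (1 / ((N:ℝ) + 1)) ^ 2 := mul_le_mul_of_nonneg_left hkey (le_of_lt h8)
      rw [dist_eq_norm, ← norm_neg, neg_sub]
      show ‖u p - u n‖ ≤ Real.sqrt (8/α) * (1 / ((N:ℝ) + 1))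
      have hr : Real.sqrt (8/α) * (1 / ((N:ℝ) + 1)) = Real.sqrt (8/α * (1 / ((N:ℝ) + 1)) ^ 2) := by
        rw [Real.sqrt_mul (by positivity), Real.sqrt_sq (by positivity)]
      rw [hr]
      calc ‖u p - u n‖ = Real.sqrt (‖u p - u n‖ ^ 2) := (Real.sqrt_sq (norm_nonneg _)).symm
        _ ≤ _ := Real.sqrt_le_sqrt hsq
    · have := tendsto_one_div_add_atTop_nhds_zero_nat (𝕜 := ℝ)
      simpa using this.const_mul (Real.sqrt (8/α))
  obtain ⟨x, hx⟩ := cauchySeq_tendsto_of_complete hcauchy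
  -- key per-n inequality
  have key : ∀ (y : E) (n : ℕ), φ hp ≤ ε + α/2 * ‖u n - z‖ ^ 2 - α/2 * ‖hp - z‖ ^ 2
      + α * ⟪u n - z, y - u n⟫ + φ y
      + α * (1 / ((n:ℝ) + 1)) / 2 * ‖y - u n‖ ^ 2 + (1 / ((n:ℝ) + 1)) := by
    intro y n
    set t : ℝ := 1 / ((n:ℝ) + 1) with htdef
    have ht0 : 0 < t := by positivity
    have ht1 : t ≤ 1 := by
      rw [htdef, div_le_one (by positivity)]
      linarith [Nat.cast_nonneg (α := ℝ) n]
    set w : E := u n + t • (y - u n) with hwdef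
    have hconv : φ w ≤ (1 - t) * φ (u n) + t * φ y := by
      have h := hφ.2 (Set.mem_univ (u n)) (Set.mem_univ y)
        (by linarith : (0:ℝ) ≤ 1 - t) (le_of_lt ht0) (by ring)
      simp only [smul_eq_mul] at h
      rwa [show (1 - t) • u n + t • y = w by rw [hwdef]; module] at h
    have hq : ‖w - z‖ ^ 2 = ‖u n - z‖ ^ 2 + 2 * t * ⟪u n - z, y - u n⟫ + t ^ 2 * ‖y - u n‖ ^ 2 := by
      rw [show w - z = (u n - z) + t • (y - u n) by rw [hwdef]; abel]
      exact exp1 _ _ _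
    have h1 : ψ (u n) < m + t ^ 2 := hu n
    have h2 : m ≤ ψ w := hm_le w
    -- divide by t
    have hdiv : φ (u n) ≤ α * ⟪u n - z, y - u n⟫ + α * t / 2 * ‖y - u n‖ ^ 2 + φ y + t := by
      have hmul : t * φ (u n)
          ≤ t * (α * ⟪u n - z, y - u n⟫ + α * t / 2 * ‖y - u n‖ ^ 2 + φ y + t) := by
        simp only [hψdef] at h1 h2
        have hq' : α/2 * ‖w - z‖ ^ 2 = α/2 * ‖u n - z‖ ^ 2 + t * (α * ⟪u n - z, y - u n⟫)
            + t * (α * t / 2 * ‖y - u n‖ ^ 2) := by rw [hq]; ring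
        nlinarith [h1, h2, hconv, hq', sq_nonneg t]
      exact le_of_mul_le_mul_left hmul ht0
    have h3 := hopt (u n)
    linarith
  -- pass to the limit
  have hfin : ∀ y : E, φ hp ≤ ε + α/2 * ‖x - z‖ ^ 2 - α/2 * ‖hp - z‖ ^ 2
      + α * ⟪x - z, y - x⟫ + φ y := by
    intro y
    have ht0 : Tendsto (fun n : ℕ => (1 / ((n:ℝ) + 1))) atTop (𝓝 0) :=
      tendsto_one_div_add_atTop_nhds_zero_nat
    have hA : Tendsto (fun n => ‖u n - z‖ ^ 2) atTop (𝓝 (‖x - z‖ ^ 2)) := by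
      have hc : Continuous fun v : E => ‖v - z‖ ^ 2 :=
        ((continuous_id.sub continuous_const).norm).pow 2
      exact (hc.tendsto x).comp hx
    have hS : Tendsto (fun n => ⟪u n - z, y - u n⟫) atTop (𝓝 (⟪x - z, y - x⟫)) := by
      have hc : Continuous fun v : E => ⟪v - z, y - v⟫ :=
        (continuous_id.sub continuous_const).inner (continuous_const.sub continuous_id)
      exact (hc.tendsto x).comp hx
    have hB : Tendsto (fun n => ‖y - u n‖ ^ 2) atTop (𝓝 (‖y - x‖ ^ 2)) := by
      have hc : Continuous fun v : E => ‖y - v‖ ^ 2 :=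
        ((continuous_const.sub continuous_id).norm).pow 2
      exact (hc.tendsto x).comp hx
    have hE : Tendsto (fun n : ℕ => α * (1 / ((n:ℝ) + 1)) / 2 * ‖y - u n‖ ^ 2) atTop
        (𝓝 (α * 0 / 2 * ‖y - x‖ ^ 2)) :=
      ((ht0.const_mul α).div_const 2).mul hB
    have hG : Tendsto (fun n => ε + α/2 * ‖u n - z‖ ^ 2 - α/2 * ‖hp - z‖ ^ 2
        + α * ⟪u n - z, y - u n⟫ + φ y
        + α * (1 / ((n:ℝ) + 1)) / 2 * ‖y - u n‖ ^ 2 + (1 / ((n:ℝ) + 1))) atTop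
        (𝓝 (ε + α/2 * ‖x - z‖ ^ 2 - α/2 * ‖hp - z‖ ^ 2 + α * ⟪x - z, y - x⟫ + φ y
        + α * 0 / 2 * ‖y - x‖ ^ 2 + 0)) :=
      (((((tendsto_const_nhds.add (hA.const_mul (α/2))).sub tendsto_const_nhds).add
        (hS.const_mul α)).add tendsto_const_nhds).add hE).add ht0
    have hlim := ge_of_tendsto' hG (fun n => key y n)
    have hz : α * 0 / 2 * ‖y - x‖ ^ 2 = 0 := by ring
    rw [hz, add_zero, add_zero] at hlim
    linarith
  -- conclude
  refine ⟨x - hp, ?_, ?_⟩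
  · have hfhp := hfin hp
    have hexp : ‖hp - z‖ ^ 2
        = ‖hp - x‖ ^ 2 + 2 * 1 * ⟪hp - x, x - z⟫ + (1:ℝ)^2 * ‖x - z‖ ^ 2 := by
      rw [show hp - z = (hp - x) + (1:ℝ) • (x - z) by module]
      exact exp1 _ _ _
    have hc : ⟪x - z, hp - x⟫ = ⟪hp - x, x - z⟫ := real_inner_comm _ _
    have hN : α/2 * ‖hp - x‖ ^ 2 ≤ ε := by nlinarith [hfhp, hexp, hc]
    have hle : ‖hp - x‖ ^ 2 ≤ 2 * ε / α := by
      rw [le_div_iff₀ hα]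
      nlinarith
    rw [show ‖x - hp‖ = ‖hp - x‖ from norm_sub_rev x hp]
    calc ‖hp - x‖ = Real.sqrt (‖hp - x‖ ^ 2) := (Real.sqrt_sq (norm_nonneg _)).symm
      _ ≤ Real.sqrt (2 * ε / α) := Real.sqrt_le_sqrt hle
  · intro y
    have hf := hfin y
    have inner_eq : ⟪α • (z - hp - (x - hp)), y - hp⟫ = -(α * ⟪x - z, y - hp⟫) := by
      rw [show z - hp - (x - hp) = -(x - z) by abel, smul_neg, inner_neg_left,
        real_inner_smul_left]
    rw [inner_eq]
    have hexp : ‖hp - z‖ ^ 2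
        = ‖hp - x‖ ^ 2 + 2 * 1 * ⟪hp - x, x - z⟫ + (1:ℝ)^2 * ‖x - z‖ ^ 2 := by
      rw [show hp - z = (hp - x) + (1:ℝ) • (x - z) by module]
      exact exp1 _ _ _
    have hc2 : ⟪x - z, y - hp⟫ - ⟪x - z, y - x⟫ = -⟪hp - x, x - z⟫ := by
      rw [← inner_sub_right, show y - hp - (y - x) = -(hp - x) by abel, inner_neg_right,
        real_inner_comm]
    have key2 : α/2 * ‖hp - z‖ ^ 2 - α/2 * ‖x - z‖ ^ 2 - α * ⟪x - z, y - x⟫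
        + α * ⟪x - z, y - hp⟫ = α/2 * ‖hp - x‖ ^ 2 := by
      linear_combination (α/2) * hexp + α * hc2
    have hsq : 0 ≤ α/2 * ‖hp - x‖ ^ 2 := by positivity
    linarith
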